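/- Let A be a negative definite self-adjoint operator on a finite-dimensional inner product space V (e.g., a discrete Laplacian Δ_h on a finite element space). For g ∈ L²(0,T;V), set y(t) := ∫_t^T e^{(s−t)A} g(s) ds. Then (∫₀^T ‖(−A)^{1/2} y(t)‖² dt)^{1/2} ≤ (∫₀^T ‖(−A)^{−1/2} g(t)‖² dt)^{1/2}. -/

import Mathlib

open MeasureTheory Nat

section Aux

variable {V : Type*} [NormedAddCommGroup V] [InnerProductSpace ℝ V] [FiniteDimensional ℝ V]

private lemma exp_apply_eq_smul (M : V →L[ℝ] V) (x : V) (a : ℝ) (h : M x = a • x) :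
    NormedSpace.exp M x = Real.exp a • x := by
  have hpow : ∀ n : ℕ, (M ^ n) x = (a ^ n) • x := by
    intro n
    induction n with
    | zero => simp
    | succ n ih =>
        rw [pow_succ, ContinuousLinearMap.mul_apply, h, _root_.map_smul, ih, smul_smul, pow_succ]
        ring_nf
  have hs : Summable (fun n : ℕ => (n ! : ℝ)⁻¹ • M ^ n) := NormedSpace.expSeries_summable' M
  have h1 : NormedSpace.exp M x = ∑' n : ℕ, ((n ! : ℝ)⁻¹ • M ^ n) x := by
    rw [NormedSpace.exp_eq_tsum (𝕂 := ℝ)]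
    exact ((ContinuousLinearMap.apply ℝ V x).map_tsum hs)
  have h2 : ∀ n : ℕ, ((n ! : ℝ)⁻¹ • M ^ n) x = (a ^ n / n !) • x := by
    intro n
    rw [ContinuousLinearMap.smul_apply, hpow, smul_smul]
    congr 1
    field_simp
  rw [h1]
  simp_rw [h2]
  rw [(Real.summable_pow_div_factorial a).tsum_smul_const]
  congr 1
  rw [Real.exp_eq_exp_ℝ, NormedSpace.exp_eq_tsum_div]

private lemma exp_symm [CompleteSpace V] (M : V →L[ℝ] V) (hM : IsSelfAdjoint M) (x y : V) :
    (inner ℝ (NormedSpace.exp M x) y : ℝ) = inner ℝ x (NormedSpace.exp M y) := by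
  have hsa : IsSelfAdjoint (NormedSpace.exp M) := by
    unfold IsSelfAdjoint
    rw [NormedSpace.star_exp, hM.star_eq]
  rw [← ContinuousLinearMap.adjoint_inner_right]
  rw [← ContinuousLinearMap.star_eq_adjoint, hsa.star_eq]

private lemma norm_exp_le_exp (M : V →L[ℝ] V) :
    ‖NormedSpace.exp M‖ ≤ Real.exp ‖M‖ := by
  rw [NormedSpace.exp_eq_tsum (𝕂 := ℝ)]
  refine (norm_tsum_le_tsum_norm (NormedSpace.norm_expSeries_summable' M)).trans ?_
  rw [Real.exp_eq_exp_ℝ, NormedSpace.exp_eq_tsum_div]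
  refine Summable.tsum_le_tsum ?_ (NormedSpace.norm_expSeries_summable' M)
    (Real.summable_pow_div_factorial _)
  intro n
  have h1 : ‖M ^ n‖ ≤ ‖M‖ ^ n := by
    cases n with
    | zero =>
        simpa [pow_zero, ContinuousLinearMap.one_def] using
          (ContinuousLinearMap.norm_id_le (E := V))
    | succ n => exact norm_pow_le' M (Nat.succ_pos n)
  rw [norm_smul, Real.norm_eq_abs, abs_of_nonneg (by positivity : (0:ℝ) ≤ (n ! : ℝ)⁻¹)]
  calc (n ! : ℝ)⁻¹ * ‖M ^ n‖ ≤ (n ! : ℝ)⁻¹ * ‖M‖ ^ n := by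
        apply mul_le_mul_of_nonneg_left h1 (by positivity)
    _ = ‖M‖ ^ n / n ! := by ring

end Aux

section Scalar

private lemma expIoc_le (l : ℝ) (hl : 0 < l) (a b : ℝ) (hab : a ≤ b) :
    ∫ s in Set.Ioc a b, Real.exp (l * (a - s)) ≤ l⁻¹ := by
  rw [← intervalIntegral.integral_of_le hab]
  have hd : ∀ s ∈ Set.uIcc a b, HasDerivAt (fun u => -l⁻¹ * Real.exp (l * (a - u)))
      (Real.exp (l * (a - s))) s := by
    intro s _
    have h1 : HasDerivAt (fun u : ℝ => l * (a - u)) (l * (-1)) s :=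
      ((hasDerivAt_id s).const_sub a).const_mul l
    have h2 := (Real.hasDerivAt_exp (l * (a - s))).comp s h1
    have h3 := h2.const_mul (-l⁻¹)
    refine HasDerivAt.congr_deriv h3 ?_
    field_simp
  have hc : Continuous fun s => Real.exp (l * (a - s)) := by continuity
  rw [intervalIntegral.integral_eq_sub_of_hasDerivAt hd (hc.intervalIntegrable a b)]
  have h0 : l * (a - a) = 0 := by ring
  rw [h0, Real.exp_zero]
  nlinarith [Real.exp_nonneg (l * (a - b)), inv_pos.mpr hl]

private lemma expIoc_le' (l : ℝ) (hl : 0 < l) (a b : ℝ) (hab : a ≤ b) :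
    ∫ t in Set.Ioc a b, Real.exp (l * (t - b)) ≤ l⁻¹ := by
  rw [← intervalIntegral.integral_of_le hab]
  have hd : ∀ t ∈ Set.uIcc a b, HasDerivAt (fun u => l⁻¹ * Real.exp (l * (u - b)))
      (Real.exp (l * (t - b))) t := by
    intro t _
    have h1 : HasDerivAt (fun u : ℝ => l * (u - b)) (l * 1) t :=
      ((hasDerivAt_id t).sub_const b).const_mul l
    have h2 := (Real.hasDerivAt_exp (l * (t - b))).comp t h1
    have h3 := h2.const_mul l⁻¹
    refine HasDerivAt.congr_deriv h3 ?_
    field_simp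
  have hc : Continuous fun t => Real.exp (l * (t - b)) := by continuity
  rw [intervalIntegral.integral_eq_sub_of_hasDerivAt hd (hc.intervalIntegrable a b)]
  have h0 : l * (b - b) = 0 := by ring
  rw [h0, Real.exp_zero]
  nlinarith [Real.exp_nonneg (l * (a - b)), inv_pos.mpr hl]

private lemma scalar_cont (T l : ℝ) (G : ℝ → ℝ)
    (hG1 : IntegrableOn G (Set.Ioc 0 T)) (hl : 0 < l) :
    ContinuousOn (fun t => ∫ s in Set.Ioc t T, Real.exp (l * (t - s)) * G s) (Set.Icc 0 T) := by
  set f : ℝ → ℝ := fun s => Real.exp (-(l * s)) * G s with hf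
  have hfc : Continuous fun s : ℝ => Real.exp (-(l * s)) := by continuity
  have hfint : IntegrableOn f (Set.Ioc 0 T) := by
    apply Integrable.mono' hG1.norm (hfc.aestronglyMeasurable.mul hG1.aestronglyMeasurable)
    rw [ae_restrict_iff' measurableSet_Ioc]
    refine Filter.Eventually.of_forall fun s hs => ?_
    simp only [Pi.mul_apply, norm_mul, Real.norm_eq_abs, Real.abs_exp]
    have h1 : Real.exp (-(l * s)) ≤ 1 := by
      rw [Real.exp_le_one_iff]
      nlinarith [hs.1]
    nlinarith [abs_nonneg (G s), Real.exp_nonneg (-(l * s))]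
  have hfIcc : IntegrableOn f (Set.Icc 0 T) := by
    rwa [integrableOn_Icc_iff_integrableOn_Ioc]
  have hprim : ContinuousOn (fun x => ∫ s in Set.Ioc 0 x, f s) (Set.Icc 0 T) :=
    intervalIntegral.continuousOn_primitive hfIcc
  have key : ∀ t ∈ Set.Icc (0:ℝ) T, (∫ s in Set.Ioc t T, Real.exp (l * (t - s)) * G s)
      = Real.exp (l * t) * ((∫ s in Set.Ioc (0:ℝ) T, f s) - ∫ s in Set.Ioc (0:ℝ) t, f s) := by
    intro t ht
    have hsplit : (∫ s in Set.Ioc (0:ℝ) T, f s)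
        = (∫ s in Set.Ioc (0:ℝ) t, f s) + ∫ s in Set.Ioc t T, f s := by
      rw [← setIntegral_union (Set.Ioc_disjoint_Ioc_of_le le_rfl) measurableSet_Ioc
        (hfint.mono_set (Set.Ioc_subset_Ioc_right ht.2))
        (hfint.mono_set (Set.Ioc_subset_Ioc_left ht.1))]
      rw [Set.Ioc_union_Ioc_eq_Ioc ht.1 ht.2]
    have hptw : ∀ s, Real.exp (l * (t - s)) * G s = Real.exp (l * t) * f s := by
      intro s
      rw [hf]
      have h1 : l * (t - s) = l * t + -(l * s) := by ring
      rw [h1, Real.exp_add, mul_assoc]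
    simp_rw [hptw]
    rw [integral_const_mul, hsplit]
    ring
  have hc2 : ContinuousOn (fun t => Real.exp (l * t)
      * ((∫ s in Set.Ioc (0:ℝ) T, f s) - ∫ s in Set.Ioc (0:ℝ) t, f s)) (Set.Icc 0 T) := by
    apply ContinuousOn.mul
    · exact (Real.continuous_exp.comp (continuous_const.mul continuous_id)).continuousOn
    · exact continuousOn_const.sub hprim
  exact hc2.congr key

private lemma scalar_sq_integrable (T l : ℝ) (G : ℝ → ℝ)
    (hG1 : IntegrableOn G (Set.Ioc 0 T)) (hl : 0 < l) :
    IntegrableOn (fun t => (∫ s in Set.Ioc t T, Real.exp (l * (t - s)) * G s) ^ 2)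
      (Set.Ioc 0 T) := by
  have h1 : IntegrableOn (fun t => (∫ s in Set.Ioc t T, Real.exp (l * (t - s)) * G s) ^ 2)
      (Set.Icc 0 T) volume := ((scalar_cont T l G hG1 hl).pow 2).integrableOn_Icc
  exact h1.mono_set Set.Ioc_subset_Icc_self

private lemma scalar_key (T l : ℝ) (hl : 0 < l) (G : ℝ → ℝ)
    (hG : MemLp G 2 (volume.restrict (Set.Ioc 0 T))) :
    l ^ 2 * ∫ t in Set.Ioc (0:ℝ) T, (∫ s in Set.Ioc t T, Real.exp (l * (t - s)) * G s) ^ 2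
      ≤ ∫ t in Set.Ioc (0:ℝ) T, G t ^ 2 := by
  haveI hfin : IsFiniteMeasure (volume.restrict (Set.Ioc (0:ℝ) T)) :=
    ⟨by rw [Measure.restrict_apply_univ]; exact measure_Ioc_lt_top⟩
  have hG2 : Integrable (fun t => G t ^ 2) (volume.restrict (Set.Ioc 0 T)) := hG.integrable_sq
  set c : ℝ → ℝ := fun t => ∫ s in Set.Ioc t T, Real.exp (l * (t - s)) * G s with hcdef
  set R : ℝ → ℝ := fun t => ∫ s in Set.Ioc t T, Real.exp (l * (t - s)) * G s ^ 2 with hRdef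
  have hR0 : ∀ t, 0 ≤ R t := fun t =>
    setIntegral_nonneg measurableSet_Ioc (fun s _ => by positivity)
  -- Step A : pointwise Cauchy-Schwarz bound
  have stepA : ∀ t ∈ Set.Ioc (0:ℝ) T, c t ^ 2 ≤ l⁻¹ * R t := by
    intro t ht
    haveI : IsFiniteMeasure (volume.restrict (Set.Ioc t T)) :=
      ⟨by rw [Measure.restrict_apply_univ]; exact measure_Ioc_lt_top⟩
    have hsub : volume.restrict (Set.Ioc t T) ≤ volume.restrict (Set.Ioc 0 T) :=
      Measure.restrict_mono (Set.Ioc_subset_Ioc_left ht.1.le) le_rfl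
    have hGt : MemLp G 2 (volume.restrict (Set.Ioc t T)) := hG.mono_measure hsub
    set w : ℝ → ℝ := fun s => Real.exp (l * (t - s) / 2) with hw
    have hwc : Continuous w := by continuity
    have hwpos : ∀ s, 0 < w s := fun s => Real.exp_pos _
    have hwle : ∀ s ∈ Set.Ioc t T, w s ≤ 1 := by
      intro s hs
      rw [hw]
      rw [Real.exp_le_one_iff]
      nlinarith [hs.1]
    have hw2 : ∀ s, w s ^ 2 = Real.exp (l * (t - s)) := by
      intro s
      rw [hw, sq, ← Real.exp_add]
      congr 1
      ring
    have hwL2 : MemLp w 2 (volume.restrict (Set.Ioc t T)) := by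
      apply MemLp.of_bound hwc.aestronglyMeasurable 1
      rw [ae_restrict_iff' measurableSet_Ioc]
      refine Filter.Eventually.of_forall fun s hs => ?_
      rw [Real.norm_eq_abs, abs_of_pos (hwpos s)]
      exact hwle s hs
    have hvL2 : MemLp (fun s => w s * G s) 2 (volume.restrict (Set.Ioc t T)) := by
      apply MemLp.of_le_mul (c := 1) hGt (hwc.aestronglyMeasurable.mul hGt.1)
      rw [ae_restrict_iff' measurableSet_Ioc]
      refine Filter.Eventually.of_forall fun s hs => ?_
      simp only [Pi.mul_apply, norm_mul]
      have hws : ‖w s‖ ≤ 1 := by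
        rw [Real.norm_eq_abs, abs_of_pos (hwpos s)]
        exact hwle s hs
      exact mul_le_mul_of_nonneg_right hws (norm_nonneg _)
    have habsL2 : MemLp (fun s => |w s * G s|) 2 (volume.restrict (Set.Ioc t T)) := by
      simpa [Real.norm_eq_abs, abs_mul] using hvL2.norm
    have hconj : Real.HolderConjugate 2 2 := Real.HolderConjugate.two_two
    have hof : ENNReal.ofReal (2:ℝ) = 2 := by
      rw [show (2:ℝ) = ((2:ℕ):ℝ) by norm_num, ENNReal.ofReal_natCast]
      norm_num
    have CS := integral_mul_le_Lp_mul_Lq_of_nonneg (μ := volume.restrict (Set.Ioc t T)) hconj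
      (Filter.Eventually.of_forall fun s => (hwpos s).le)
      (Filter.Eventually.of_forall fun s => abs_nonneg _)
      (hof ▸ hwL2) (hof ▸ habsL2)
    have hpow2 : ∀ x : ℝ, x ^ (2:ℝ) = x ^ 2 := fun x => by
      rw [show (2:ℝ) = ((2:ℕ):ℝ) by norm_num, Real.rpow_natCast]
    simp_rw [hpow2] at CS
    have habs2 : ∀ s, |w s * G s| ^ 2 = Real.exp (l * (t - s)) * G s ^ 2 := fun s => by
      rw [sq_abs, mul_pow, hw2]
    have hIw : (∫ s in Set.Ioc t T, w s ^ 2) ≤ l⁻¹ := by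
      simp_rw [hw2]
      exact expIoc_le l hl t T ht.2
    have hIw0 : (0:ℝ) ≤ ∫ s in Set.Ioc t T, w s ^ 2 :=
      setIntegral_nonneg measurableSet_Ioc fun s _ => sq_nonneg _
    have hIv : (∫ s in Set.Ioc t T, |w s * G s| ^ 2) = R t := by
      rw [hRdef]
      simp_rw [habs2]
    have hcle : |c t| ≤ ∫ s in Set.Ioc t T, w s * |w s * G s| := by
      rw [hcdef]
      have h1 : ∀ s, Real.exp (l * (t - s)) * G s = w s * (w s * G s) := by
        intro s
        rw [← mul_assoc, ← sq, hw2]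
      simp only
      simp_rw [h1]
      calc |∫ s in Set.Ioc t T, w s * (w s * G s)|
          ≤ ∫ s in Set.Ioc t T, ‖w s * (w s * G s)‖ := by
            rw [← Real.norm_eq_abs]
            exact norm_integral_le_integral_norm _
        _ = ∫ s in Set.Ioc t T, w s * |w s * G s| := by
            apply integral_congr_ae
            refine Filter.Eventually.of_forall fun s => ?_
            show ‖w s * (w s * G s)‖ = w s * |w s * G s|
            rw [Real.norm_eq_abs, abs_mul, abs_of_pos (hwpos s)]
    have hfinal : |c t| ≤ Real.sqrt l⁻¹ * Real.sqrt (R t) := by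
      refine hcle.trans (CS.trans ?_)
      rw [hIv]
      have e1 : (∫ s in Set.Ioc t T, w s ^ 2) ^ ((1:ℝ)/2) ≤ Real.sqrt l⁻¹ := by
        rw [← Real.sqrt_eq_rpow]
        exact Real.sqrt_le_sqrt hIw
      have e2 : (R t) ^ ((1:ℝ)/2) = Real.sqrt (R t) := (Real.sqrt_eq_rpow _).symm
      rw [e2]
      apply mul_le_mul_of_nonneg_right e1 (Real.sqrt_nonneg _)
    have h2 : c t ^ 2 ≤ (Real.sqrt l⁻¹ * Real.sqrt (R t)) ^ 2 := by
      rw [← sq_abs (c t)]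
      exact pow_le_pow_left₀ (abs_nonneg _) hfinal 2
    calc c t ^ 2 ≤ (Real.sqrt l⁻¹ * Real.sqrt (R t)) ^ 2 := h2
      _ = l⁻¹ * R t := by
          rw [mul_pow, Real.sq_sqrt (by positivity), Real.sq_sqrt (hR0 t)]
  -- Step B : Fubini
  set μT := volume.restrict (Set.Ioc (0:ℝ) T) with hμT
  set F : ℝ × ℝ → ℝ :=
    fun p => (if p.1 < p.2 then Real.exp (l * (p.1 - p.2)) else 0) * G p.2 ^ 2 with hF
  have hFnn : ∀ p, 0 ≤ F p := by
    intro p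
    rw [hF]
    apply mul_nonneg _ (sq_nonneg _)
    split_ifs
    · exact Real.exp_nonneg _
    · exact le_refl 0
  have hdom : Integrable (fun p : ℝ × ℝ => (1:ℝ) * G p.2 ^ 2) (μT.prod μT) :=
    Integrable.mul_prod (integrable_const 1) hG2
  have hFmeas : AEStronglyMeasurable F (μT.prod μT) := by
    apply AEStronglyMeasurable.mul
    · apply Measurable.aestronglyMeasurable
      exact Measurable.ite (measurableSet_lt measurable_fst measurable_snd)
        (Real.measurable_exp.comp ((measurable_fst.sub measurable_snd).const_mul l))
        measurable_const
    · have := hdom.aestronglyMeasurable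
      simpa using this
  have hFint : Integrable F (μT.prod μT) := by
    apply Integrable.mono' hdom hFmeas
    refine Filter.Eventually.of_forall fun p => ?_
    rw [hF, Real.norm_eq_abs, abs_mul, abs_sq]
    apply mul_le_mul_of_nonneg_right _ (sq_nonneg _)
    split_ifs with h
    · rw [Real.abs_exp, Real.exp_le_one_iff]
      nlinarith
    · simp
  have hRint : Integrable R μT := by
    have h1 : Integrable (fun t => ∫ s, F (t, s) ∂μT) μT := hFint.integral_prod_left
    apply h1.congr
    rw [hμT]
    filter_upwards [ae_restrict_mem measurableSet_Ioc] with t ht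
    -- show ∫ s, F (t, s) ∂μT = R t
    have hind : ∀ s, F (t, s)
        = (Set.Ioi t).indicator (fun s => Real.exp (l * (t - s)) * G s ^ 2) s := by
      intro s
      rw [hF]
      simp only [Set.indicator_apply, Set.mem_Ioi]
      split_ifs with h
      · rfl
      · simp
    simp_rw [hind]
    rw [integral_indicator measurableSet_Ioi, Measure.restrict_restrict measurableSet_Ioi]
    rw [Set.inter_comm, Set.Ioc_inter_Ioi, max_eq_right ht.1.le]
  have hFR : ∀ t ∈ Set.Ioc (0:ℝ) T, (∫ s, F (t, s) ∂μT) = R t := by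
    intro t ht
    have hind : ∀ s, F (t, s)
        = (Set.Ioi t).indicator (fun s => Real.exp (l * (t - s)) * G s ^ 2) s := by
      intro s
      rw [hF]
      simp only [Set.indicator_apply, Set.mem_Ioi]
      split_ifs with h
      · rfl
      · simp
    simp_rw [hind]
    rw [hμT, integral_indicator measurableSet_Ioi, Measure.restrict_restrict measurableSet_Ioi]
    rw [Set.inter_comm, Set.Ioc_inter_Ioi, max_eq_right ht.1.le]
  have hGS : ∀ s ∈ Set.Ioc (0:ℝ) T, (∫ t, F (t, s) ∂μT) ≤ l⁻¹ * G s ^ 2 := by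
    intro s hs
    have hind : ∀ t, F (t, s)
        = (Set.Iio s).indicator (fun t => Real.exp (l * (t - s)) * G s ^ 2) t := by
      intro t
      rw [hF]
      simp only [Set.indicator_apply, Set.mem_Iio]
      split_ifs with h
      · rfl
      · simp
    simp_rw [hind]
    rw [hμT, integral_indicator measurableSet_Iio, Measure.restrict_restrict measurableSet_Iio]
    have hset : Set.Iio s ∩ Set.Ioc 0 T = Set.Ioo 0 s := by
      ext u
      simp only [Set.mem_inter_iff, Set.mem_Iio, Set.mem_Ioc, Set.mem_Ioo]
      constructor
      · rintro ⟨h1, h2, _⟩; exact ⟨h2, h1⟩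
      · rintro ⟨h1, h2⟩; exact ⟨h2, h1, (h2.trans_le hs.2).le⟩
    rw [hset, integral_mul_const, ← integral_Ioc_eq_integral_Ioo]
    exact mul_le_mul_of_nonneg_right (expIoc_le' l hl 0 s hs.1.le) (sq_nonneg _)
  have hswap := integral_integral_swap (μ := μT) (ν := μT) (f := fun t s => F (t, s))
    (by exact hFint)
  have hintR : (∫ t, (∫ s, F (t, s) ∂μT) ∂μT) = ∫ t, R t ∂μT := by
    apply integral_congr_ae
    rw [hμT]
    filter_upwards [ae_restrict_mem measurableSet_Ioc] with t ht using hFR t ht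
  have hineq2 : (∫ t, R t ∂μT) ≤ l⁻¹ * ∫ t, G t ^ 2 ∂μT := by
    rw [← hintR, hswap, ← integral_const_mul]
    apply integral_mono_of_nonneg
    · exact Filter.Eventually.of_forall fun s => integral_nonneg fun t => hFnn (t, s)
    · exact hG2.const_mul l⁻¹
    · rw [hμT]
      filter_upwards [ae_restrict_mem measurableSet_Ioc] with s hs using hGS s hs
  have hineq1 : (∫ t, c t ^ 2 ∂μT) ≤ l⁻¹ * ∫ t, R t ∂μT := by
    rw [← integral_const_mul]
    apply integral_mono_of_nonneg
    · exact Filter.Eventually.of_forall fun t => sq_nonneg _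
    · exact hRint.const_mul _
    · rw [hμT]
      filter_upwards [ae_restrict_mem measurableSet_Ioc] with t ht using stepA t ht
  have hlne : l ≠ 0 := hl.ne'
  calc l ^ 2 * ∫ t, c t ^ 2 ∂μT
      ≤ l ^ 2 * (l⁻¹ * ∫ t, R t ∂μT) := by
        apply mul_le_mul_of_nonneg_left hineq1 (by positivity)
    _ ≤ l ^ 2 * (l⁻¹ * (l⁻¹ * ∫ t, G t ^ 2 ∂μT)) := by
        apply mul_le_mul_of_nonneg_left _ (by positivity)
        apply mul_le_mul_of_nonneg_left hineq2 (by positivity)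
    _ = ∫ t, G t ^ 2 ∂μT := by
        field_simp

end Scalar

/-- for a negative definite self-adjoint operator `A` on a
finite-dimensional inner ℝ product space `V` (with positive square root `B` of `-A`,
with inverse `Binv`), the solution `y(t) = ∫_t^T e^{(s-t)A} g(s) ds` of the backward
equation satisfies `(∫₀^T ‖(-A)^{1/2} y‖²)^{1/2} ≤ (∫₀^T ‖(-A)^{-1/2} g‖²)^{1/2}`. -/
theorem stmt7
    {V : Type*} [NormedAddCommGroup V] [InnerProductSpace ℝ V] [FiniteDimensional ℝ V]
    (A : V →L[ℝ] V)
    (hAsym : ∀ x y : V, (inner ℝ (A x) y : ℝ) = inner ℝ x (A y))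
    (hAneg : ∀ x : V, x ≠ 0 → (inner ℝ (A x) x : ℝ) < 0)
    (B Binv : V →L[ℝ] V)
    (hBsym : ∀ x y : V, (inner ℝ (B x) y : ℝ) = inner ℝ x (B y))
    (hBpos : ∀ x : V, x ≠ 0 → 0 < (inner ℝ (B x) x : ℝ))
    (hBB : B.comp B = -A)
    (hBinv : Binv.comp B = ContinuousLinearMap.id ℝ V ∧
             B.comp Binv = ContinuousLinearMap.id ℝ V)
    (T : ℝ) (hT : 0 < T)
    (g : ℝ → V) (hg : MemLp g 2 (volume.restrict (Set.Ioc 0 T)))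
    (y : ℝ → V)
    (hy : ∀ t, y t = ∫ s in t..T, (NormedSpace.exp ((s - t) • A)) (g s)) :
    Real.sqrt (∫ t in (0:ℝ)..T, ‖B (y t)‖ ^ 2)
      ≤ Real.sqrt (∫ t in (0:ℝ)..T, ‖Binv (g t)‖ ^ 2) := by
  classical
  haveI hfin : IsFiniteMeasure (volume.restrict (Set.Ioc (0:ℝ) T)) :=
    ⟨by rw [Measure.restrict_apply_univ]; exact measure_Ioc_lt_top⟩
  have hBsymm : (B : V →ₗ[ℝ] V).IsSymmetric := fun x y => hBsym x y
  set n := Module.finrank ℝ V with hn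
  set b : OrthonormalBasis (Fin n) ℝ V := hBsymm.eigenvectorBasis rfl with hb
  set μe : Fin n → ℝ := hBsymm.eigenvalues rfl with hμe
  have hbB : ∀ i, B (b i) = μe i • b i := fun i => hBsymm.apply_eigenvectorBasis rfl i
  have hbnorm : ∀ i, ‖b i‖ = 1 := fun i => b.orthonormal.1 i
  have hbne : ∀ i, b i ≠ 0 := fun i => by
    intro h
    have := hbnorm i
    rw [h, norm_zero] at this
    norm_num at this
  have hμpos : ∀ i, 0 < μe i := by
    intro i
    have h1 := hBpos (b i) (hbne i)
    rw [hbB i, real_inner_smul_left, real_inner_self_eq_norm_sq, hbnorm i] at h1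
    simpa using h1
  set lam : Fin n → ℝ := fun i => μe i ^ 2 with hlam
  have hlampos : ∀ i, 0 < lam i := fun i => by
    rw [hlam]
    exact pow_pos (hμpos i) 2
  have hA_b : ∀ i, A (b i) = (-(lam i)) • b i := by
    intro i
    have h1 : (B.comp B) (b i) = lam i • b i := by
      rw [ContinuousLinearMap.comp_apply, hbB i, _root_.map_smul, hbB i, smul_smul]
      congr 1
      simp only [hlam]
      ring
    have h2 : (-A) (b i) = lam i • b i := by rw [← hBB]; exact h1
    have h3 : -(A (b i)) = lam i • b i := h2
    rw [neg_smul, ← h3, neg_neg]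
  have hBinv_b : ∀ i, Binv (b i) = (μe i)⁻¹ • b i := by
    intro i
    have h1 : Binv (B (b i)) = b i := by
      rw [← ContinuousLinearMap.comp_apply, hBinv.1]
      rfl
    rw [hbB i, _root_.map_smul] at h1
    have h2 := congrArg (fun v => (μe i)⁻¹ • v) h1
    simp only [smul_smul, inv_mul_cancel₀ (hμpos i).ne', one_smul] at h2
    exact h2
  have hAsa : IsSelfAdjoint A :=
    ContinuousLinearMap.isSelfAdjoint_iff_isSymmetric.mpr fun x z => hAsym x z
  have hexp_b : ∀ (r : ℝ) (i : Fin n),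
      NormedSpace.exp (r • A) (b i) = Real.exp (-(r * lam i)) • b i := by
    intro r i
    apply exp_apply_eq_smul
    rw [ContinuousLinearMap.smul_apply, hA_b i, smul_smul]
    congr 1
    ring
  have hexp_sym : ∀ (r : ℝ) (x z : V),
      (inner ℝ (NormedSpace.exp (r • A) x) z : ℝ) = inner ℝ x (NormedSpace.exp (r • A) z) :=
    fun r x z => exp_symm (r • A) ((IsSelfAdjoint.all r).smul hAsa) x z
  -- components
  set G : Fin n → ℝ → ℝ := fun i s => (inner ℝ (b i) (g s) : ℝ) with hGdef
  have hGmem : ∀ i, MemLp (G i) 2 (volume.restrict (Set.Ioc 0 T)) := fun i =>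
    hg.const_inner (b i)
  set c : Fin n → ℝ → ℝ :=
    fun i t => ∫ s in Set.Ioc t T, Real.exp (lam i * (t - s)) * G i s with hcdef
  have hgInt : IntegrableOn g (Set.Ioc 0 T) := hg.integrable one_le_two
  have hyint : ∀ t ∈ Set.Ioc (0:ℝ) T,
      IntervalIntegrable (fun s => (NormedSpace.exp ((s - t) • A)) (g s)) volume t T := by
    intro t ht
    rw [intervalIntegrable_iff_integrableOn_Ioc_of_le ht.2]
    have hgt : IntegrableOn g (Set.Ioc t T) := hgInt.mono_set (Set.Ioc_subset_Ioc_left ht.1.le)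
    have hcexp : Continuous fun s : ℝ => NormedSpace.exp ((s - t) • A) :=
      (continuousOn_univ.mp (by rw [← Metric.eball_top_eq_univ (0 : V →L[ℝ] V), ← NormedSpace.expSeries_radius_eq_top ℝ (V →L[ℝ] V)]; exact NormedSpace.continuousOn_exp)).comp ((continuous_id.sub continuous_const).smul continuous_const)
    have hmeas : AEStronglyMeasurable (fun s => (NormedSpace.exp ((s - t) • A)) (g s))
        (volume.restrict (Set.Ioc t T)) := by
      have hpair : AEStronglyMeasurable
          (fun s => (NormedSpace.exp ((s - t) • A), g s)) (volume.restrict (Set.Ioc t T)) :=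
        hcexp.aestronglyMeasurable.prodMk hgt.aestronglyMeasurable
      exact (isBoundedBilinearMap_apply.continuous.comp_aestronglyMeasurable hpair : _)
    apply Integrable.mono' (hgt.norm.const_mul (Real.exp (T * ‖A‖))) hmeas
    rw [ae_restrict_iff' measurableSet_Ioc]
    refine Filter.Eventually.of_forall fun s hs => ?_
    calc ‖(NormedSpace.exp ((s - t) • A)) (g s)‖
        ≤ ‖NormedSpace.exp ((s - t) • A)‖ * ‖g s‖ := ContinuousLinearMap.le_opNorm _ _
      _ ≤ Real.exp (T * ‖A‖) * ‖g s‖ := by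
          apply mul_le_mul_of_nonneg_right _ (norm_nonneg _)
          refine (norm_exp_le_exp _).trans ?_
          apply Real.exp_le_exp.mpr
          refine le_trans (ContinuousLinearMap.opNorm_smul_le _ _) ?_
          rw [Real.norm_eq_abs, abs_of_nonneg (by linarith [hs.1] : (0:ℝ) ≤ s - t)]
          have h1 : s - t ≤ T := by
            have := hs.2
            have := ht.1
            linarith
          exact mul_le_mul_of_nonneg_right h1 (norm_nonneg A)
  have hcomp : ∀ (i : Fin n), ∀ t ∈ Set.Ioc (0:ℝ) T, (inner ℝ (b i) (y t) : ℝ) = c i t := by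
    intro i t ht
    rw [hy t, hcdef]
    have hpull := (innerSL ℝ (b i)).intervalIntegral_comp_comm (hyint t ht)
    simp only [innerSL_apply_apply] at hpull
    rw [← hpull, intervalIntegral.integral_of_le ht.2]
    apply setIntegral_congr_fun measurableSet_Ioc
    intro s _
    show (inner ℝ (b i) ((NormedSpace.exp ((s - t) • A)) (g s)) : ℝ) = _
    rw [← hexp_sym (s - t) (b i) (g s), hexp_b (s - t) i, real_inner_smul_left]
    congr 1
    ring_nf
  -- norm expansions
  have hBexp : ∀ v : V, ‖B v‖ ^ 2 = ∑ i, lam i * (inner ℝ (b i) v : ℝ) ^ 2 := by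
    intro v
    rw [← real_inner_self_eq_norm_sq, ← b.sum_inner_mul_inner (B v) (B v)]
    apply Finset.sum_congr rfl
    intro i _
    have e1 : (inner ℝ (b i) (B v) : ℝ) = μe i * inner ℝ (b i) v := by
      rw [← hBsym (b i) v, hbB i, real_inner_smul_left]
    have e2 : (inner ℝ (B v) (b i) : ℝ) = μe i * inner ℝ (b i) v :=
      (real_inner_comm (B v) (b i)).symm.trans e1
    rw [e1, e2]
    simp only [hlam]
    ring
  have hBinvsym : ∀ x z : V, (inner ℝ (Binv x) z : ℝ) = inner ℝ x (Binv z) := by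
    intro x z
    conv_lhs => rw [show z = B (Binv z) by
      rw [← ContinuousLinearMap.comp_apply, hBinv.2]; rfl]
    rw [← hBsym (Binv x) (Binv z)]
    rw [show B (Binv x) = x by rw [← ContinuousLinearMap.comp_apply, hBinv.2]; rfl]
  have hBinvexp : ∀ v : V, ‖Binv v‖ ^ 2 = ∑ i, (lam i)⁻¹ * (inner ℝ (b i) v : ℝ) ^ 2 := by
    intro v
    rw [← real_inner_self_eq_norm_sq, ← b.sum_inner_mul_inner (Binv v) (Binv v)]
    apply Finset.sum_congr rfl
    intro i _
    have e1 : (inner ℝ (b i) (Binv v) : ℝ) = (μe i)⁻¹ * inner ℝ (b i) v := by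
      rw [← hBinvsym (b i) v, hBinv_b i, real_inner_smul_left]
    have e2 : (inner ℝ (Binv v) (b i) : ℝ) = (μe i)⁻¹ * inner ℝ (b i) v :=
      (real_inner_comm (Binv v) (b i)).symm.trans e1
    rw [e1, e2]
    simp only [hlam]
    ring
  -- integrability of components
  have hcint : ∀ i, IntegrableOn (fun t => (c i t) ^ 2) (Set.Ioc 0 T) := fun i =>
    scalar_sq_integrable T (lam i) (G i) ((hGmem i).integrable one_le_two) (hlampos i)
  have hGint : ∀ i, Integrable (fun t => (G i t) ^ 2) (volume.restrict (Set.Ioc 0 T)) :=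
    fun i => (hGmem i).integrable_sq
  -- main computation
  rw [intervalIntegral.integral_of_le hT.le, intervalIntegral.integral_of_le hT.le]
  have hL : (∫ t in Set.Ioc (0:ℝ) T, ‖B (y t)‖ ^ 2)
      = ∑ i, lam i * ∫ t in Set.Ioc (0:ℝ) T, (c i t) ^ 2 := by
    rw [setIntegral_congr_fun measurableSet_Ioc
      (f := fun t => ‖B (y t)‖ ^ 2) (g := fun t => ∑ i, lam i * (c i t) ^ 2)
      (by
        intro t ht
        show ‖B (y t)‖ ^ 2 = ∑ i, lam i * (c i t) ^ 2
        rw [hBexp (y t)]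
        exact Finset.sum_congr rfl fun i _ => by rw [hcomp i t ht])]
    rw [integral_finset_sum _ (fun i _ => (hcint i).const_mul (lam i))]
    exact Finset.sum_congr rfl fun i _ => integral_const_mul _ _
  have hR : (∫ t in Set.Ioc (0:ℝ) T, ‖Binv (g t)‖ ^ 2)
      = ∑ i, (lam i)⁻¹ * ∫ t in Set.Ioc (0:ℝ) T, (G i t) ^ 2 := by
    rw [setIntegral_congr_fun measurableSet_Ioc
      (f := fun t => ‖Binv (g t)‖ ^ 2) (g := fun t => ∑ i, (lam i)⁻¹ * (G i t) ^ 2)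
      (fun t _ => hBinvexp (g t))]
    rw [integral_finset_sum _ (fun i _ => (hGint i).const_mul ((lam i)⁻¹))]
    exact Finset.sum_congr rfl fun i _ => integral_const_mul _ _
  rw [hL, hR]
  apply Real.sqrt_le_sqrt
  apply Finset.sum_le_sum
  intro i _
  have hkey := scalar_key T (lam i) (hlampos i) (G i) (hGmem i)
  have hlne : lam i ≠ 0 := (hlampos i).ne'
  have heq : lam i * (∫ t in Set.Ioc (0:ℝ) T, (c i t) ^ 2)
      = (lam i)⁻¹ * (lam i ^ 2 * ∫ t in Set.Ioc (0:ℝ) T, (c i t) ^ 2) := by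
    field_simp
  rw [heq]
  exact mul_le_mul_of_nonneg_left hkey (by positivity)
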